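/- Let S be a nonnegative random variable with Laplace transform E[e^{-r S}] = e^{-B(r) t} for all r ≥ 0, where B is a Bernstein function satisfying B(r) ≥ k r^α for all r ≥ λ₁, with constants k, λ₁ > 0 and α ∈ (0,1]. Then for any λ > 0 there exist constants c, c' > 0 such that E[S^{-1/2} e^{-λ S / 2}] ≤ c (min(1/2, t))^{-1/(2α)} e^{-c' t} for all t > 0. -/

import Mathlib

open MeasureTheory

open Real Set in
lemma my_exp_integral {s : ℝ} (hs : 0 < s) (lam : ℝ) :
    ∫ u in Ioi (0:ℝ), Real.exp (-((u + lam) * s)) = Real.exp (-(lam * s)) * s⁻¹ := by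
  have h1 : ∀ u : ℝ, Real.exp (-((u + lam) * s)) = Real.exp (-(lam*s)) * Real.exp (-(s * u)) := by
    intro u; rw [← Real.exp_add]; ring_nf
  simp_rw [h1]
  rw [MeasureTheory.integral_const_mul]
  have h2 := integral_comp_mul_left_Ioi (fun x => Real.exp (-x)) 0 hs
  simp only [mul_zero, integral_exp_neg_Ioi, neg_zero, Real.exp_zero, smul_eq_mul,
    mul_one] at h2
  rw [h2]

open Real Set in
lemma my_exp_integrable {s : ℝ} (hs : 0 < s) (lam : ℝ) :
    IntegrableOn (fun u : ℝ => Real.exp (-((u + lam) * s))) (Ioi 0) := by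
  have heq : (fun u : ℝ => Real.exp (-((u + lam) * s)))
      = fun u => Real.exp (-(lam*s)) * Real.exp (-s * u) := by
    funext u; rw [← Real.exp_add]; ring_nf
  rw [heq]
  exact (exp_neg_integrableOn_Ioi 0 hs).const_mul _

open Real Set in
lemma my_tail_integrable {p b : ℝ} (hp : 0 < p) (hb : 0 < b) :
    IntegrableOn (fun x : ℝ => Real.exp (-b * x ^ p)) (Ioi 0) := by
  by_contra h
  have h1 := integral_exp_neg_mul_rpow hp hb
  rw [MeasureTheory.integral_undef h] at h1
  have h2 : 0 < b ^ (-1/p) * Real.Gamma (1/p + 1) :=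
    mul_pos (Real.rpow_pos_of_pos hb _) (Real.Gamma_pos_of_pos (by positivity))
  rw [← h1] at h2
  exact lt_irrefl _ h2

lemma my_B_super {B : ℝ → ℝ} (hBmono : MonotoneOn B (Set.Ici 0)) {u v : ℝ}
    (hu : 0 ≤ u) (hv : 0 ≤ v) : (B u + B v) / 2 ≤ B (u + v) := by
  have h1 := hBmono (Set.mem_Ici.2 hu) (Set.mem_Ici.2 (by linarith : (0:ℝ) ≤ u + v)) (by linarith)
  have h2 := hBmono (Set.mem_Ici.2 hv) (Set.mem_Ici.2 (by linarith : (0:ℝ) ≤ u + v)) (by linarith)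
  linarith


set_option maxHeartbeats 1000000 in
/-- Subordinator moment bound: if `S_t ≥ 0` has Laplace transform
`E[e^{-r S_t}] = e^{-B(r) t}`, where `B` is a Bernstein function with `B(0)=0`, `B > 0` on
`(0,∞)`, nondecreasing and concave on `[0,∞)`, satisfying `B(r) ≥ k r^α` for `r ≥ λ₁`,
then for any `λ > 0` there are `c, c' > 0` with
`E[S_t^{-1/2} e^{-λ S_t/2}] ≤ c (min(1/2,t))^{-1/(2α)} e^{-c' t}` for all `t > 0`. -/
theorem stmt4 {Ω : Type*} [MeasureSpace Ω] [IsProbabilityMeasure (volume : Measure Ω)]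
    (S : ℝ → Ω → ℝ) (B : ℝ → ℝ) (k lam₁ α : ℝ)
    (hk : 0 < k) (hlam₁ : 0 < lam₁) (hα : 0 < α) (hα1 : α ≤ 1)
    (hB0 : B 0 = 0) (hBpos : ∀ r : ℝ, 0 < r → 0 < B r)
    (hBmono : MonotoneOn B (Set.Ici (0:ℝ))) (hBconc : ConcaveOn ℝ (Set.Ici (0:ℝ)) B)
    (hSnn : ∀ t : ℝ, 0 < t → ∀ ω, 0 ≤ S t ω)
    (hLap : ∀ t : ℝ, 0 < t → ∀ r : ℝ, 0 ≤ r →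
      (∫ ω, Real.exp (-(r * S t ω))) = Real.exp (-(B r * t)))
    (hBlow : ∀ r : ℝ, lam₁ ≤ r → k * r ^ α ≤ B r) :
    ∀ lam : ℝ, 0 < lam → ∃ c c' : ℝ, 0 < c ∧ 0 < c' ∧ ∀ t : ℝ, 0 < t →
      (∫ ω, (S t ω) ^ (-(1/2 : ℝ)) * Real.exp (-(lam * S t ω) / 2))
        ≤ c * (min (1/2) t) ^ (-(1/(2*α))) * Real.exp (-(c' * t)) := by
  intro lam hlam
  have hGam : 0 < Real.Gamma (1/α + 1) := Real.Gamma_pos_of_pos (by positivity)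
  set Ck : ℝ := (k/2) ^ (-1/α) * Real.Gamma (1/α + 1) with hCkdef
  have hCkpos : 0 < Ck := mul_pos (Real.rpow_pos_of_pos (by positivity) _) hGam
  set c : ℝ := (lam₁ + Ck) ^ ((1:ℝ)/2) with hcdef
  have hcpos : 0 < c := Real.rpow_pos_of_pos (by linarith) _
  have hBlam : 0 < B lam := hBpos lam hlam
  refine ⟨c, B lam / 4, hcpos, by linarith, ?_⟩
  intro t ht
  -- measurability of S t
  have hS : AEMeasurable (S t) (volume : Measure Ω) := by
    have h1 := hLap t ht 1 zero_le_one
    have hint : Integrable (fun ω => Real.exp (-(1 * S t ω))) (volume : Measure Ω) := by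
      by_contra h
      rw [integral_undef h] at h1
      exact (Real.exp_pos _).ne' h1.symm
    have hm := hint.aestronglyMeasurable.aemeasurable
    have heq : (fun ω => -Real.log (Real.exp (-(1 * S t ω)))) = S t := by
      funext ω; rw [Real.log_exp]; ring
    rw [← heq]
    exact (Real.measurable_log.comp_aemeasurable hm).neg
  set S₀ : Ω → ℝ := fun ω => max (hS.mk (S t) ω) 0 with hS₀def
  have hS₀m : Measurable S₀ := hS.measurable_mk.max measurable_const
  have hS₀nn : ∀ ω, 0 ≤ S₀ ω := fun ω => le_max_right _ _
  have hae : S t =ᵐ[(volume : Measure Ω)] S₀ := by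
    filter_upwards [hS.ae_eq_mk] with ω h
    simp only [hS₀def, ← h, max_eq_left (hSnn t ht ω)]
  set f₀ : Ω → ℝ := fun ω => (S₀ ω) ^ (-(1/2:ℝ)) * Real.exp (-(lam * S₀ ω) / 2) with hf₀def
  have hf₀m : Measurable f₀ := by fun_prop
  set g₀ : Ω → ℝ := fun ω => (S₀ ω)⁻¹ * Real.exp (-(lam * S₀ ω)) with hg₀def
  set I : ENNReal := ∫⁻ ω, ENNReal.ofReal (f₀ ω) with hIdef
  set J : ENNReal := ∫⁻ ω, ENNReal.ofReal (g₀ ω) with hJdef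
  -- the LHS equals toReal I
  have hfeq : (∫ ω, (S t ω) ^ (-(1/2:ℝ)) * Real.exp (-(lam * S t ω) / 2)) = I.toReal := by
    rw [show (∫ ω, (S t ω) ^ (-(1/2:ℝ)) * Real.exp (-(lam * S t ω) / 2)) = ∫ ω, f₀ ω from
      integral_congr_ae (by filter_upwards [hae] with ω h; rw [h])]
    exact integral_eq_lintegral_of_nonneg_ae
      (Filter.Eventually.of_forall fun ω => by positivity) hf₀m.aestronglyMeasurable
  -- Cauchy-Schwarz
  have hCS : I ≤ J ^ ((1:ℝ)/2) := by
    have hconj : Real.HolderConjugate 2 2 := Real.HolderConjugate.two_two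
    have h := ENNReal.lintegral_mul_le_Lp_mul_Lq (volume : Measure Ω) hconj
      (f := fun ω => ENNReal.ofReal (f₀ ω)) (g := fun _ => 1)
      (by fun_prop) aemeasurable_const
    simp only [Pi.mul_apply, mul_one, ENNReal.one_rpow, lintegral_const, measure_univ,
      one_mul] at h
    have hsq : ∀ ω, (ENNReal.ofReal (f₀ ω)) ^ (2:ℝ) = ENNReal.ofReal (g₀ ω) := by
      intro ω
      rw [ENNReal.ofReal_rpow_of_nonneg (by positivity) (by norm_num)]
      congr 1
      simp only [hf₀def, hg₀def]
      rw [Real.mul_rpow (Real.rpow_nonneg (hS₀nn ω) _) (Real.exp_pos _).le,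
        ← Real.rpow_mul (hS₀nn ω), ← Real.exp_mul]
      norm_num [Real.rpow_neg_one]
    simp_rw [hsq] at h
    simpa using h
  -- bound J
  set E : ℝ := Real.exp (-(B lam * t) / 2) with hEdef
  have hJb : J ≤ ENNReal.ofReal (E * (lam₁ + Ck * t ^ (-1/α))) := by
    have hstepA : ∀ ω, ENNReal.ofReal (g₀ ω)
        ≤ ∫⁻ u in Set.Ioi (0:ℝ), ENNReal.ofReal (Real.exp (-((u + lam) * S₀ ω))) := by
      intro ω
      rcases eq_or_lt_of_le (hS₀nn ω) with h0 | h0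
      · simp [hg₀def, ← h0]
      · rw [← ofReal_integral_eq_lintegral_ofReal (my_exp_integrable h0 lam)
          (Filter.Eventually.of_forall fun u => (Real.exp_pos _).le), my_exp_integral h0 lam]
        exact le_of_eq (by simp only [hg₀def]; rw [mul_comm])
    have hB1 : J ≤ ∫⁻ ω, ∫⁻ u in Set.Ioi (0:ℝ), ENNReal.ofReal (Real.exp (-((u + lam) * S₀ ω))) :=
      lintegral_mono hstepA
    have hswap : (∫⁻ ω, ∫⁻ u in Set.Ioi (0:ℝ), ENNReal.ofReal (Real.exp (-((u + lam) * S₀ ω))))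
        = ∫⁻ u in Set.Ioi (0:ℝ), ∫⁻ ω, ENNReal.ofReal (Real.exp (-((u + lam) * S₀ ω))) := by
      refine lintegral_lintegral_swap ?_
      apply Measurable.aemeasurable
      exact (by fun_prop :
        Measurable fun p : Ω × ℝ => ENNReal.ofReal (Real.exp (-((p.2 + lam) * S₀ p.1))))
    have hinner : ∀ u ∈ Set.Ioi (0:ℝ), (∫⁻ ω, ENNReal.ofReal (Real.exp (-((u + lam) * S₀ ω))))
        = ENNReal.ofReal (Real.exp (-(B (u + lam) * t))) := by
      intro u hu
      have hu' : 0 < u := hu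
      have hr : (0:ℝ) ≤ u + lam := by linarith
      have hint : Integrable (fun ω => Real.exp (-((u + lam) * S₀ ω))) (volume : Measure Ω) := by
        refine Integrable.mono' (integrable_const 1) ((by fun_prop : Measurable fun ω => Real.exp (-((u + lam) * S₀ ω)))).aestronglyMeasurable ?_
        filter_upwards with ω
        rw [Real.norm_eq_abs, abs_of_pos (Real.exp_pos _)]
        exact Real.exp_le_one_iff.2 (neg_nonpos.2 (mul_nonneg hr (hS₀nn ω)))
      rw [← ofReal_integral_eq_lintegral_ofReal hint
        (Filter.Eventually.of_forall fun ω => (Real.exp_pos _).le)]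
      congr 1
      rw [show (∫ ω, Real.exp (-((u + lam) * S₀ ω))) = ∫ ω, Real.exp (-((u + lam) * S t ω)) from
        integral_congr_ae (by filter_upwards [hae] with ω h; rw [h])]
      exact hLap t ht (u + lam) hr
    have hB2 : J ≤ ∫⁻ u in Set.Ioi (0:ℝ), ENNReal.ofReal (Real.exp (-(B (u + lam) * t))) := by
      refine le_trans (hB1.trans (le_of_eq hswap)) (le_of_eq ?_)
      exact setLIntegral_congr_fun measurableSet_Ioi
        (fun u hu => hinner u hu)
    have hB3 : J ≤ ∫⁻ u in Set.Ioi (0:ℝ), ENNReal.ofReal (E * Real.exp (-(B u * t) / 2)) := by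
      refine hB2.trans (lintegral_mono_ae ?_)
      filter_upwards [ae_restrict_mem measurableSet_Ioi] with u hu
      refine ENNReal.ofReal_le_ofReal ?_
      rw [hEdef, ← Real.exp_add]
      refine Real.exp_le_exp.2 ?_
      have hsup := my_B_super hBmono (le_of_lt hu) hlam.le
      nlinarith [mul_le_mul_of_nonneg_right hsup ht.le]
    have hsplit : (∫⁻ u in Set.Ioi (0:ℝ), ENNReal.ofReal (E * Real.exp (-(B u * t) / 2)))
        = (∫⁻ u in Set.Ioc (0:ℝ) lam₁, ENNReal.ofReal (E * Real.exp (-(B u * t) / 2)))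
          + ∫⁻ u in Set.Ioi lam₁, ENNReal.ofReal (E * Real.exp (-(B u * t) / 2)) := by
      rw [← Set.Ioc_union_Ioi_eq_Ioi hlam₁.le,
        lintegral_union measurableSet_Ioi
          (Set.disjoint_left.2 fun x hx hx' => absurd hx.2 (not_le.2 hx'))]
    have hpart1 : (∫⁻ u in Set.Ioc (0:ℝ) lam₁, ENNReal.ofReal (E * Real.exp (-(B u * t) / 2)))
        ≤ ENNReal.ofReal (E * lam₁) := by
      calc (∫⁻ u in Set.Ioc (0:ℝ) lam₁, ENNReal.ofReal (E * Real.exp (-(B u * t) / 2)))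
          ≤ ∫⁻ _ in Set.Ioc (0:ℝ) lam₁, ENNReal.ofReal E := by
            refine lintegral_mono_ae ?_
            filter_upwards [ae_restrict_mem measurableSet_Ioc] with u hu
            refine ENNReal.ofReal_le_ofReal ?_
            have hBu : 0 < B u := hBpos u hu.1
            nlinarith [Real.exp_le_one_iff.2 (by nlinarith : -(B u * t) / 2 ≤ 0),
              Real.exp_pos (-(B lam * t) / 2)]
        _ = ENNReal.ofReal E * volume (Set.Ioc (0:ℝ) lam₁) := setLIntegral_const _ _
        _ = ENNReal.ofReal (E * lam₁) := by
            rw [Real.volume_Ioc, sub_zero, ← ENNReal.ofReal_mul (Real.exp_pos _).le]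
    have hb : 0 < k * t / 2 := by positivity
    have hpart2 : (∫⁻ u in Set.Ioi lam₁, ENNReal.ofReal (E * Real.exp (-(B u * t) / 2)))
        ≤ ENNReal.ofReal (E * (Ck * t ^ (-1/α))) := by
      calc (∫⁻ u in Set.Ioi lam₁, ENNReal.ofReal (E * Real.exp (-(B u * t) / 2)))
          ≤ ∫⁻ u in Set.Ioi lam₁, ENNReal.ofReal (E * Real.exp (-(k*t/2) * u ^ α)) := by
            refine lintegral_mono_ae ?_
            filter_upwards [ae_restrict_mem measurableSet_Ioi] with u hu
            refine ENNReal.ofReal_le_ofReal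
              (mul_le_mul_of_nonneg_left (Real.exp_le_exp.2 ?_) (Real.exp_pos _).le)
            have := hBlow u (le_of_lt hu)
            nlinarith
        _ ≤ ∫⁻ u in Set.Ioi (0:ℝ), ENNReal.ofReal (E * Real.exp (-(k*t/2) * u ^ α)) :=
            lintegral_mono_set (Set.Ioi_subset_Ioi hlam₁.le)
        _ = ENNReal.ofReal (E * ((k*t/2) ^ (-1/α) * Real.Gamma (1/α + 1))) := by
            rw [← ofReal_integral_eq_lintegral_ofReal
              ((my_tail_integrable hα hb).const_mul E)
              (Filter.Eventually.of_forall fun u => by positivity)]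
            congr 1
            rw [MeasureTheory.integral_const_mul, integral_exp_neg_mul_rpow hα hb]
        _ = ENNReal.ofReal (E * (Ck * t ^ (-1/α))) := by
            congr 1
            rw [hCkdef, show k * t / 2 = (k/2) * t by ring,
              Real.mul_rpow (by positivity) ht.le]
            ring
    calc J ≤ _ := hB3
      _ = _ := hsplit
      _ ≤ ENNReal.ofReal (E * lam₁) + ENNReal.ofReal (E * (Ck * t ^ (-1/α))) :=
          add_le_add hpart1 hpart2
      _ = ENNReal.ofReal (E * (lam₁ + Ck * t ^ (-1/α))) := by
          rw [← ENNReal.ofReal_add (mul_nonneg (Real.exp_pos _).le hlam₁.le)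
            (mul_nonneg (Real.exp_pos _).le
              (mul_nonneg hCkpos.le (Real.rpow_nonneg ht.le _)))]
          congr 1
          ring
  -- conclude
  have hI2 : I ≤ ENNReal.ofReal ((E * (lam₁ + Ck * t ^ (-1/α))) ^ ((1:ℝ)/2)) := by
    calc I ≤ J ^ ((1:ℝ)/2) := hCS
      _ ≤ (ENNReal.ofReal (E * (lam₁ + Ck * t ^ (-1/α)))) ^ ((1:ℝ)/2) :=
        ENNReal.rpow_le_rpow hJb (by norm_num)
      _ = ENNReal.ofReal ((E * (lam₁ + Ck * t ^ (-1/α))) ^ ((1:ℝ)/2)) :=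
        ENNReal.ofReal_rpow_of_nonneg (by positivity) (by norm_num)
  rw [hfeq]
  refine le_trans (ENNReal.toReal_le_of_le_ofReal (by positivity) hI2) ?_
  -- real algebra
  set m : ℝ := min (1/2) t with hmdef
  have hm : 0 < m := lt_min (by norm_num) ht
  have hm2 : m ≤ 1/2 := min_le_left _ _
  have hmt : m ≤ t := min_le_right _ _
  have hexp : -1/α ≤ 0 := by
    rw [neg_div]
    exact neg_nonpos.2 (by positivity)
  have hmono : t ^ (-1/α) ≤ m ^ (-1/α) := Real.rpow_le_rpow_of_nonpos hm hmt hexp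
  have hone : (1:ℝ) ≤ m ^ (-1/α) :=
    Real.one_le_rpow_of_pos_of_le_one_of_nonpos hm (by linarith) hexp
  have hsum : lam₁ + Ck * t ^ (-1/α) ≤ (lam₁ + Ck) * m ^ (-1/α) := by
    have h1 : lam₁ * 1 ≤ lam₁ * m ^ (-1/α) := mul_le_mul_of_nonneg_left hone hlam₁.le
    have h2 : Ck * t ^ (-1/α) ≤ Ck * m ^ (-1/α) := mul_le_mul_of_nonneg_left hmono hCkpos.le
    nlinarith
  have hsumnn : (0:ℝ) ≤ lam₁ + Ck * t ^ (-1/α) :=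
    add_nonneg hlam₁.le (mul_nonneg hCkpos.le (Real.rpow_nonneg ht.le _))
  have hEhalf : E ^ ((1:ℝ)/2) = Real.exp (-(B lam / 4 * t)) := by
    rw [hEdef, ← Real.exp_mul]
    ring_nf
  have hexp2 : (-1/α) * ((1:ℝ)/2) = -(1/(2*α)) := by
    ring
  calc (E * (lam₁ + Ck * t ^ (-1/α))) ^ ((1:ℝ)/2)
      = E ^ ((1:ℝ)/2) * (lam₁ + Ck * t ^ (-1/α)) ^ ((1:ℝ)/2) :=
        Real.mul_rpow (Real.exp_pos _).le hsumnn
    _ ≤ E ^ ((1:ℝ)/2) * ((lam₁ + Ck) * m ^ (-1/α)) ^ ((1:ℝ)/2) :=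
        mul_le_mul_of_nonneg_left (Real.rpow_le_rpow hsumnn hsum (by norm_num))
          (Real.rpow_nonneg (Real.exp_pos _).le _)
    _ = Real.exp (-(B lam / 4 * t)) * (c * m ^ (-(1/(2*α)))) := by
        rw [hEhalf, Real.mul_rpow (by linarith) (Real.rpow_nonneg hm.le _),
          ← Real.rpow_mul hm.le, hexp2, hcdef]
    _ = c * m ^ (-(1/(2*α))) * Real.exp (-(B lam / 4 * t)) := by ring
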